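/- If v is a smooth solution of the critical NLS i∂ₜv + (1/2)Δv = λ|v|^{4/n}v on (-T,T) × ℝⁿ, then u(t,x) = (cos ωt)^{-n/2} e^{-i(ω/2)|x|² tan ωt} v(tan(ωt)/ω, x/cos ωt) is a smooth solution of i∂ₜu + (1/2)Δu = (ω²|x|²/2)u + λ|u|^{4/n}u on (-arctan(ωT)/ω, arctan(ωT)/ω) × ℝⁿ. -/

import Mathlib

/-- The Laplacian of a complex-valued function on `ℝⁿ`, as a sum of second partial
derivatives along the coordinate directions. -/
noncomputable def laplacianC {n : ℕ} (f : EuclideanSpace ℝ (Fin n) → ℂ)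
    (x : EuclideanSpace ℝ (Fin n)) : ℂ :=
  ∑ i : Fin n, fderiv ℝ (fun y => fderiv ℝ f y (EuclideanSpace.single i 1)) x
    (EuclideanSpace.single i 1)

open Complex Real

section helpers
variable {n : ℕ}

lemma hasFDerivAt_normSqC (y : EuclideanSpace ℝ (Fin n)) :
    HasFDerivAt (fun z : EuclideanSpace ℝ (Fin n) => ((‖z‖^2 : ℝ) : ℂ))
      (Complex.ofRealCLM.comp (2 • innerSL ℝ y)) y :=
  Complex.ofRealCLM.hasFDerivAt.comp y (hasStrictFDerivAt_norm_sq y).hasFDerivAt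

lemma hasFDerivAt_expPart (b : ℂ) (y : EuclideanSpace ℝ (Fin n)) :
    HasFDerivAt (fun z : EuclideanSpace ℝ (Fin n) => Complex.exp (b * ((‖z‖^2 : ℝ) : ℂ)))
      ((Complex.exp (b * ((‖y‖^2:ℝ):ℂ)) * b) • (Complex.ofRealCLM.comp (2 • innerSL ℝ y))) y := by
  have h := ((hasFDerivAt_normSqC y).const_mul b).cexp
  rw [mul_smul]
  exact h

lemma hasFDerivAt_comp_smul {w : EuclideanSpace ℝ (Fin n) → ℂ}
    {Dw : EuclideanSpace ℝ (Fin n) →L[ℝ] ℂ} (ρ : ℝ) (y : EuclideanSpace ℝ (Fin n))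
    (hw : HasFDerivAt w Dw (ρ • y)) :
    HasFDerivAt (fun z : EuclideanSpace ℝ (Fin n) => w (ρ • z)) (ρ • Dw) y := by
  have hlin : HasFDerivAt (fun z : EuclideanSpace ℝ (Fin n) => ρ • z)
      (ρ • ContinuousLinearMap.id ℝ (EuclideanSpace ℝ (Fin n))) y := by
    exact (ρ • ContinuousLinearMap.id ℝ (EuclideanSpace ℝ (Fin n))).hasFDerivAt (x := y)
  have h := hw.comp y hlin
  have heq : ρ • Dw = Dw.comp (ρ • ContinuousLinearMap.id ℝ (EuclideanSpace ℝ (Fin n))) := by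
    ext h'
    simp [map_smul]
  rw [heq]
  exact h

lemma hasFDerivAt_innerC (e x : EuclideanSpace ℝ (Fin n)) :
    HasFDerivAt (fun y : EuclideanSpace ℝ (Fin n) => ((inner ℝ y e : ℝ) : ℂ))
      (Complex.ofRealCLM.comp (innerSL ℝ e)) x := by
  have heq : (fun y : EuclideanSpace ℝ (Fin n) => ((inner ℝ y e : ℝ) : ℂ))
      = fun y => ((innerSL ℝ e y : ℝ) : ℂ) := by
    funext y; rw [real_inner_comm]; simp
  rw [heq]
  exact Complex.ofRealCLM.hasFDerivAt.comp x ((innerSL ℝ e).hasFDerivAt (x := x))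

lemma fderiv_uSpatial_apply (A b : ℂ) (ρ : ℝ) {w : EuclideanSpace ℝ (Fin n) → ℂ}
    {Dw : EuclideanSpace ℝ (Fin n) →L[ℝ] ℂ} (y h : EuclideanSpace ℝ (Fin n))
    (hw : HasFDerivAt w Dw (ρ • y)) :
    fderiv ℝ (fun z : EuclideanSpace ℝ (Fin n) =>
        A * Complex.exp (b * ((‖z‖^2:ℝ):ℂ)) * w (ρ • z)) y h
      = A * Complex.exp (b * ((‖y‖^2:ℝ):ℂ)) *
          (b * (2 * ((inner ℝ y h : ℝ) : ℂ)) * w (ρ • y) + (ρ:ℝ) • Dw h) := by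
  have h1 := ((hasFDerivAt_expPart b y).const_mul A).mul (hasFDerivAt_comp_smul ρ y hw)
  erw [h1.fderiv]
  simp [smul_smul]
  ring

lemma fderiv_uSpatial2_apply (A b : ℂ) (ρ : ℝ) (e x : EuclideanSpace ℝ (Fin n))
    {w wi : EuclideanSpace ℝ (Fin n) → ℂ}
    {Dw Dwi : EuclideanSpace ℝ (Fin n) →L[ℝ] ℂ}
    (hw : HasFDerivAt w Dw (ρ • x)) (hwi : HasFDerivAt wi Dwi (ρ • x)) :
    fderiv ℝ (fun y : EuclideanSpace ℝ (Fin n) =>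
        A * Complex.exp (b * ((‖y‖^2:ℝ):ℂ)) *
          (b * (2 * ((inner ℝ y e : ℝ):ℂ)) * w (ρ • y) + (ρ:ℂ) * wi (ρ • y))) x e
      = A * Complex.exp (b * ((‖x‖^2:ℝ):ℂ)) *
          ( b * (2 * ((inner ℝ x e : ℝ):ℂ)) *
              (b * (2 * ((inner ℝ x e : ℝ):ℂ)) * w (ρ • x) + (ρ:ℂ) * wi (ρ • x))
            + b * (2 * ((inner ℝ e e : ℝ):ℂ)) * w (ρ • x)
            + b * (2 * ((inner ℝ x e : ℝ):ℂ)) * (ρ:ℂ) * Dw e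
            + (ρ:ℂ)^2 * Dwi e) := by
  have h_t1 := (((hasFDerivAt_innerC e x).const_mul (2:ℂ)).const_mul b).mul
      (hasFDerivAt_comp_smul ρ x hw)
  have h_t2 := (hasFDerivAt_comp_smul ρ x hwi).const_mul ((ρ:ℝ):ℂ)
  have h_all := ((hasFDerivAt_expPart b x).const_mul A).mul (h_t1.add h_t2)
  erw [h_all.fderiv]
  simp [smul_smul, real_inner_comm]
  ring

end helpers

set_option maxHeartbeats 4000000 in
/-- The lens transform maps solutions of the critical NLS to solutions of the
critical NLS with isotropic harmonic potential. -/
theorem lens_transform_of_critical_NLS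
    (n : ℕ) (hn : 1 ≤ n) (ω lam T : ℝ) (hω : 0 < ω) (hT : 0 < T)
    (v u : ℝ → EuclideanSpace ℝ (Fin n) → ℂ)
    (hvreg : ContDiffOn ℝ 2 (fun p : ℝ × EuclideanSpace ℝ (Fin n) => v p.1 p.2)
      (Set.Ioo (-T) T ×ˢ Set.univ))
    (hv : ∀ t x, |t| < T →
      Complex.I * deriv (fun s => v s x) t + (1 / 2) * laplacianC (v t) x
        = (lam : ℂ) * ((‖v t x‖ ^ ((4 : ℝ) / n) : ℝ) : ℂ) * v t x)
    (hu : ∀ t x, u t x = ((Real.cos (ω * t) ^ (-(n : ℝ) / 2) : ℝ) : ℂ)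
        * Complex.exp (-Complex.I * (ω / 2) * (‖x‖ : ℂ) ^ 2 * (Real.tan (ω * t) : ℂ))
        * v (Real.tan (ω * t) / ω) ((Real.cos (ω * t))⁻¹ • x)) :
    ∀ t x, |t| < Real.arctan (ω * T) / ω →
      Complex.I * deriv (fun s => u s x) t + (1 / 2) * laplacianC (u t) x
        = ((ω : ℂ) ^ 2 * (‖x‖ : ℂ) ^ 2 / 2) * u t x
          + (lam : ℂ) * ((‖u t x‖ ^ ((4 : ℝ) / n) : ℝ) : ℂ) * u t x := by
  intro t x ht
  -- Part A : trigonometric setup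
  have hπ2 : Real.arctan (ω*T) < π/2 := Real.arctan_lt_pi_div_two _
  have hta : |ω * t| < Real.arctan (ω * T) := by
    rw [abs_mul, abs_of_pos hω]
    calc ω * |t| < ω * (Real.arctan (ω*T)/ω) := by exact (mul_lt_mul_iff_right₀ hω).2 ht
    _ = Real.arctan (ω*T) := by field_simp
  obtain ⟨hta1, hta2⟩ := abs_lt.1 hta
  have hat_pos : -(π/2) < -Real.arctan (ω*T) := by linarith
  have hθ1 : -(π/2) < ω * t := by linarith
  have hθ2 : ω * t < π/2 := by linarith
  have hc : 0 < Real.cos (ω * t) := Real.cos_pos_of_mem_Ioo ⟨hθ1, hθ2⟩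
  have hcne : Real.cos (ω * t) ≠ 0 := ne_of_gt hc
  have hτ1 : Real.tan (ω*t) < ω * T := by
    have := Real.tan_lt_tan_of_lt_of_lt_pi_div_two hθ1 hπ2 hta2
    rwa [Real.tan_arctan] at this
  have hτ2 : -(ω * T) < Real.tan (ω*t) := by
    have := Real.tan_lt_tan_of_lt_of_lt_pi_div_two hat_pos hθ2 hta1
    rwa [Real.tan_neg, Real.tan_arctan] at this
  have hs₀ : |Real.tan (ω*t) / ω| < T := by
    rw [abs_div, abs_of_pos hω, div_lt_iff₀ hω, abs_lt]
    constructor <;> nlinarith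
  -- Part B : regularity of the uncurried solution and slice derivatives
  set s₀ : ℝ := Real.tan (ω*t) / ω with hs₀def
  set ρ : ℝ := (Real.cos (ω*t))⁻¹ with hρdef
  set V : ℝ × EuclideanSpace ℝ (Fin n) → ℂ := fun p => v p.1 p.2 with hVdef
  set Ω : Set (ℝ × EuclideanSpace ℝ (Fin n)) := Set.Ioo (-T) T ×ˢ Set.univ with hΩdef
  have hΩopen : IsOpen Ω := isOpen_Ioo.prod isOpen_univ
  have hmem : ∀ z : EuclideanSpace ℝ (Fin n), ((s₀, z) : ℝ × _) ∈ Ω := by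
    intro z
    refine ⟨?_, trivial⟩
    obtain ⟨h1, h2⟩ := abs_lt.1 hs₀
    exact ⟨h1, h2⟩
  have hVd : ∀ z, DifferentiableAt ℝ V (s₀, z) := fun z =>
    (hvreg.differentiableOn (by norm_num)).differentiableAt (hΩopen.mem_nhds (hmem z))
  set F := fderiv ℝ V with hFdef
  have hF1 : ContDiffOn ℝ 1 F Ω := hvreg.fderiv_of_isOpen hΩopen (by norm_num)
  have hFd : ∀ z, DifferentiableAt ℝ F (s₀, z) := fun z =>
    (hF1.differentiableOn (by norm_num)).differentiableAt (hΩopen.mem_nhds (hmem z))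
  have hcurveR : ∀ z : EuclideanSpace ℝ (Fin n),
      HasFDerivAt (fun y : EuclideanSpace ℝ (Fin n) => ((s₀, y) : ℝ × _))
        (ContinuousLinearMap.inr ℝ ℝ (EuclideanSpace ℝ (Fin n))) z := by
    intro z
    have h := (hasFDerivAt_const (𝕜 := ℝ) s₀ z).prodMk (hasFDerivAt_id z)
    exact h
  have hslice : ∀ z, HasFDerivAt (v s₀)
      ((F (s₀,z)).comp (ContinuousLinearMap.inr ℝ ℝ (EuclideanSpace ℝ (Fin n)))) z := by
    intro z
    exact ((hVd z).hasFDerivAt).comp z (hcurveR z)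
  set e : Fin n → EuclideanSpace ℝ (Fin n) := fun i => EuclideanSpace.single i 1 with hedef
  set wi : Fin n → EuclideanSpace ℝ (Fin n) → ℂ := fun i z => F (s₀, z) ((0:ℝ), e i) with hwidef
  have hwiHas : ∀ i z, HasFDerivAt (wi i)
      ((ContinuousLinearMap.apply ℝ ℂ (((0:ℝ), e i) : ℝ × _)).comp
        ((fderiv ℝ F (s₀,z)).comp (ContinuousLinearMap.inr ℝ ℝ (EuclideanSpace ℝ (Fin n))))) z := by
    intro i z
    exact (ContinuousLinearMap.apply ℝ ℂ (((0:ℝ), e i) : ℝ × _)).hasFDerivAt.comp z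
      (((hFd z).hasFDerivAt).comp z (hcurveR z))
  have hesingle : ∀ i, e i = EuclideanSpace.single i 1 := fun i => rfl
  -- Part C : amplitude and phase constants, spatial derivatives of u t
  set a : ℝ := Real.cos (ω*t) ^ (-(n:ℝ)/2) with hadef
  have hapos : 0 < a := Real.rpow_pos_of_pos hc _
  set A : ℂ := (a : ℂ) with hAdef
  set b : ℂ := -Complex.I * ((ω:ℂ)/2) * ((Real.tan (ω*t) : ℝ) : ℂ) with hbdef
  have hu_t : u t = fun y => A * Complex.exp (b * ((‖y‖^2:ℝ):ℂ)) * (v s₀) (ρ • y) := by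
    funext y
    rw [hu t y]
    rw [hAdef, hadef, hbdef, hs₀def, hρdef]
    push_cast
    ring_nf
  have hgrad : ∀ i, (fun y => fderiv ℝ (u t) y (e i))
      = fun y => A * Complex.exp (b * ((‖y‖^2:ℝ):ℂ)) *
          (b * (2 * ((inner ℝ y (e i) : ℝ):ℂ)) * (v s₀) (ρ • y) + (ρ:ℂ) * wi i (ρ • y)) := by
    intro i
    funext y
    rw [hu_t, fderiv_uSpatial_apply A b ρ y (e i) (hslice (ρ • y))]
    simp [Complex.real_smul, hwidef]
  have hΔ : laplacianC (v s₀) (ρ • x)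
      = ∑ i, fderiv ℝ F (s₀, ρ • x) (((0:ℝ), e i) : ℝ × _) (((0:ℝ), e i) : ℝ × _) := by
    unfold laplacianC
    refine Finset.sum_congr rfl fun i _ => ?_
    rw [← hesingle i]
    have h1 : (fun y => fderiv ℝ (v s₀) y (e i)) = wi i := by
      funext z
      rw [(hslice z).fderiv]
      simp [hwidef]
    rw [h1, (hwiHas i (ρ • x)).fderiv]
    simp
  have hstep : laplacianC (u t) x = ∑ i, (A * Complex.exp (b * ((‖x‖^2:ℝ):ℂ)) *
        ( b * (2 * ((inner ℝ x (e i) : ℝ):ℂ)) *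
            (b * (2 * ((inner ℝ x (e i) : ℝ):ℂ)) * (v s₀) (ρ • x) + (ρ:ℂ) * wi i (ρ • x))
          + b * (2 * ((inner ℝ (e i) (e i) : ℝ):ℂ)) * (v s₀) (ρ • x)
          + b * (2 * ((inner ℝ x (e i) : ℝ):ℂ)) * (ρ:ℂ) * wi i (ρ • x)
          + (ρ:ℂ)^2 * fderiv ℝ F (s₀, ρ • x) (((0:ℝ), e i) : ℝ × _) (((0:ℝ), e i) : ℝ × _))) := by
    unfold laplacianC
    refine Finset.sum_congr rfl fun i _ => ?_
    rw [← hesingle i, hgrad i,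
      fderiv_uSpatial2_apply A b ρ (e i) x (hslice (ρ • x)) (hwiHas i (ρ • x))]
    simp [hwidef]
  have hNsum : (∑ i, ((x i : ℝ):ℂ)^2) = ((‖x‖^2:ℝ):ℂ) := by
    have h1 : ‖x‖^2 = ∑ i, (x i)^2 := by
      rw [EuclideanSpace.norm_eq, Real.sq_sqrt]
      · refine Finset.sum_congr rfl fun i _ => ?_
        rw [Real.norm_eq_abs]
        exact _root_.sq_abs _
      · exact Finset.sum_nonneg fun i _ => sq_nonneg _
    rw [h1]
    push_cast
    rfl
  have hxrepr : (∑ i, x i • e i) = x := by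
    have hx := (EuclideanSpace.basisFun (Fin n) ℝ).sum_repr x
    simpa [EuclideanSpace.basisFun_repr, EuclideanSpace.basisFun_apply, hesingle] using hx
  have hRsum : (∑ i, ((x i : ℝ):ℂ) * wi i (ρ • x)) = F (s₀, ρ • x) (((0:ℝ), x) : ℝ × _) := by
    calc (∑ i, ((x i : ℝ):ℂ) * wi i (ρ • x))
        = ∑ i, ((F (s₀, ρ • x)).comp
            (ContinuousLinearMap.inr ℝ ℝ (EuclideanSpace ℝ (Fin n)))) (x i • e i) := by
          refine Finset.sum_congr rfl fun i _ => ?_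
          rw [map_smul]
          simp [hwidef, Complex.real_smul]
      _ = ((F (s₀, ρ • x)).comp
            (ContinuousLinearMap.inr ℝ ℝ (EuclideanSpace ℝ (Fin n)))) (∑ i, x i • e i) := by
          rw [map_sum]
      _ = F (s₀, ρ • x) (((0:ℝ), x) : ℝ × _) := by rw [hxrepr]; simp
  have hxi : ∀ i, ((inner ℝ x (e i) : ℝ):ℂ) = ((x i : ℝ):ℂ) := by
    intro i
    rw [hesingle]
    norm_cast
    rw [real_inner_comm]
    simp [EuclideanSpace.inner_single_left]
  have hee : ∀ i, ((inner ℝ (e i) (e i) : ℝ):ℂ) = 1 := by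
    intro i
    rw [hesingle]
    norm_cast
    simp [EuclideanSpace.inner_single_left, EuclideanSpace.single_apply]
  have hlap : laplacianC (u t) x
      = A * Complex.exp (b * ((‖x‖^2:ℝ):ℂ)) *
        ( 4*b^2*((‖x‖^2:ℝ):ℂ) * (v s₀) (ρ • x) + 2*(n:ℂ)*b*(v s₀) (ρ • x)
          + 4*b*(ρ:ℂ)*(F (s₀, ρ • x) (((0:ℝ), x) : ℝ × _))
          + (ρ:ℂ)^2 * laplacianC (v s₀) (ρ • x)) := by
    rw [hstep, ← Finset.mul_sum]
    congr 1
    calc (∑ i, ( b * (2 * ((inner ℝ x (e i) : ℝ):ℂ)) *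
            (b * (2 * ((inner ℝ x (e i) : ℝ):ℂ)) * (v s₀) (ρ • x) + (ρ:ℂ) * wi i (ρ • x))
          + b * (2 * ((inner ℝ (e i) (e i) : ℝ):ℂ)) * (v s₀) (ρ • x)
          + b * (2 * ((inner ℝ x (e i) : ℝ):ℂ)) * (ρ:ℂ) * wi i (ρ • x)
          + (ρ:ℂ)^2 * fderiv ℝ F (s₀, ρ • x) (((0:ℝ), e i) : ℝ × _) (((0:ℝ), e i) : ℝ × _)))
        = ∑ i, ((4*b^2*(v s₀) (ρ • x)) * ((x i : ℝ):ℂ)^2 + 2*b*(v s₀) (ρ • x)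
            + (4*b*(ρ:ℂ)) * (((x i : ℝ):ℂ) * wi i (ρ • x))
            + (ρ:ℂ)^2 * fderiv ℝ F (s₀, ρ • x) (((0:ℝ), e i) : ℝ × _) (((0:ℝ), e i) : ℝ × _)) := by
          refine Finset.sum_congr rfl fun i _ => ?_
          rw [hxi i, hee i]
          ring
      _ = (4*b^2*(v s₀) (ρ • x)) * (∑ i, ((x i : ℝ):ℂ)^2) + (n:ℂ) * (2*b*(v s₀) (ρ • x))
            + (4*b*(ρ:ℂ)) * (∑ i, ((x i : ℝ):ℂ) * wi i (ρ • x))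
            + (ρ:ℂ)^2 * (∑ i, fderiv ℝ F (s₀, ρ • x) (((0:ℝ), e i) : ℝ × _) (((0:ℝ), e i) : ℝ × _)) := by
          simp [Finset.sum_add_distrib, ← Finset.mul_sum, Finset.sum_const, Finset.card_univ,
            nsmul_eq_mul]
      _ = 4*b^2*((‖x‖^2:ℝ):ℂ) * (v s₀) (ρ • x) + 2*(n:ℂ)*b*(v s₀) (ρ • x)
          + 4*b*(ρ:ℂ)*(F (s₀, ρ • x) (((0:ℝ), x) : ℝ × _))
          + (ρ:ℂ)^2 * laplacianC (v s₀) (ρ • x) := by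
          rw [hNsum, hRsum, ← hΔ]
          ring
  -- Part D : time derivative
  have hωs : HasDerivAt (fun s : ℝ => ω * s) ω t := by
    simpa using (hasDerivAt_id t).const_mul ω
  have hcosd : HasDerivAt (fun s : ℝ => Real.cos (ω*s)) (-Real.sin (ω*t) * ω) t :=
    (Real.hasDerivAt_cos (ω*t)).comp t hωs
  have hcpow : HasDerivAt (fun s : ℝ => Real.cos (ω*s) ^ (-(n:ℝ)/2))
      ((-Real.sin (ω*t) * ω) * (-(n:ℝ)/2) * Real.cos (ω*t) ^ (-(n:ℝ)/2 - 1)) t :=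
    hcosd.rpow_const (Or.inl hcne)
  have hcpowC : HasDerivAt (fun s : ℝ => ((Real.cos (ω*s) ^ (-(n:ℝ)/2) : ℝ) : ℂ))
      ((((-Real.sin (ω*t) * ω) * (-(n:ℝ)/2) * Real.cos (ω*t) ^ (-(n:ℝ)/2 - 1) : ℝ)) : ℂ) t :=
    Complex.ofRealCLM.hasFDerivAt.comp_hasDerivAt t hcpow
  have htand : HasDerivAt (fun s : ℝ => Real.tan (ω*s)) (1 / Real.cos (ω*t)^2 * ω) t :=
    (Real.hasDerivAt_tan hcne).comp t hωs
  have htanC : HasDerivAt (fun s : ℝ => ((Real.tan (ω*s) : ℝ) : ℂ))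
      (((1 / Real.cos (ω*t)^2 * ω : ℝ)) : ℂ) t :=
    Complex.ofRealCLM.hasFDerivAt.comp_hasDerivAt t htand
  set K : ℂ := -Complex.I * ((ω:ℂ)/2) * ((‖x‖:ℝ):ℂ)^2 with hKdef
  have hexpC : HasDerivAt (fun s : ℝ => Complex.exp (K * ((Real.tan (ω*s) : ℝ):ℂ)))
      (Complex.exp (K * ((Real.tan (ω*t) : ℝ):ℂ)) *
        (K * (((1 / Real.cos (ω*t)^2 * ω : ℝ)) : ℂ))) t :=
    (htanC.const_mul K).cexp
  have hsigma : HasDerivAt (fun s : ℝ => Real.tan (ω*s) / ω) (1 / Real.cos (ω*t)^2 * ω / ω) t :=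
    htand.div_const ω
  have hinv : HasDerivAt (fun s : ℝ => (Real.cos (ω*s))⁻¹)
      (-(-Real.sin (ω*t) * ω) / Real.cos (ω*t)^2) t := hcosd.inv hcne
  have hcurveT : HasDerivAt
      (fun s : ℝ => ((Real.tan (ω*s) / ω, (Real.cos (ω*s))⁻¹ • x) : ℝ × EuclideanSpace ℝ (Fin n)))
      ((1 / Real.cos (ω*t)^2 * ω / ω, (-(-Real.sin (ω*t) * ω) / Real.cos (ω*t)^2) • x)) t :=
    hsigma.prodMk (hinv.smul_const x)
  have hVt : HasDerivAt
      (fun s : ℝ => V (Real.tan (ω*s) / ω, (Real.cos (ω*s))⁻¹ • x))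
      (F (s₀, ρ • x) (((1 / Real.cos (ω*t)^2 * ω / ω,
        (-(-Real.sin (ω*t) * ω) / Real.cos (ω*t)^2) • x)) : ℝ × EuclideanSpace ℝ (Fin n))) t :=
    by have h := ((hVd (ρ • x)).hasFDerivAt).comp_hasDerivAt t hcurveT; exact h
  have hfun : (fun s => u s x) = fun s => ((Real.cos (ω*s) ^ (-(n:ℝ)/2) : ℝ) : ℂ) *
      Complex.exp (K * ((Real.tan (ω*s) : ℝ):ℂ)) *
      V (Real.tan (ω*s) / ω, (Real.cos (ω*s))⁻¹ • x) := by
    funext s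
    exact hu s x
  have hD := (hcpowC.mul hexpC).mul hVt
  have hderiv : deriv (fun s => u s x) t =
      ((((-Real.sin (ω*t) * ω) * (-(n:ℝ)/2) * Real.cos (ω*t) ^ (-(n:ℝ)/2 - 1) : ℝ) : ℂ) *
          Complex.exp (K * ((Real.tan (ω*t) : ℝ):ℂ)) +
        ((Real.cos (ω*t) ^ (-(n:ℝ)/2) : ℝ) : ℂ) *
          (Complex.exp (K * ((Real.tan (ω*t) : ℝ):ℂ)) *
            (K * (((1 / Real.cos (ω*t)^2 * ω : ℝ)) : ℂ)))) *
        V (Real.tan (ω*t) / ω, (Real.cos (ω*t))⁻¹ • x) +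
      ((Real.cos (ω*t) ^ (-(n:ℝ)/2) : ℝ) : ℂ) * Complex.exp (K * ((Real.tan (ω*t) : ℝ):ℂ)) *
        F (s₀, ρ • x) (((1 / Real.cos (ω*t)^2 * ω / ω,
          (-(-Real.sin (ω*t) * ω) / Real.cos (ω*t)^2) • x)) : ℝ × EuclideanSpace ℝ (Fin n)) := by
    rw [hfun]
    exact hD.deriv
  -- Part E : assembly
  have hQcurve : HasDerivAt (fun s : ℝ => ((s, ρ • x) : ℝ × EuclideanSpace ℝ (Fin n)))
      ((((1:ℝ), (0 : EuclideanSpace ℝ (Fin n)))) : ℝ × _) s₀ :=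
    (hasDerivAt_id s₀).prodMk (hasDerivAt_const s₀ _)
  have hQ : HasDerivAt (fun s => v s (ρ • x))
      (F (s₀, ρ • x) (((1:ℝ), (0 : EuclideanSpace ℝ (Fin n))))) s₀ :=
    by have h := ((hVd (ρ • x)).hasFDerivAt).comp_hasDerivAt s₀ hQcurve; exact h
  have hveqC := hv s₀ (ρ • x) hs₀
  rw [hQ.deriv] at hveqC
  have hsplit : F (s₀, ρ • x) (((1 / Real.cos (ω*t)^2 * ω / ω,
        (-(-Real.sin (ω*t) * ω) / Real.cos (ω*t)^2) • x)) : ℝ × EuclideanSpace ℝ (Fin n))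
      = (((1 / Real.cos (ω*t)^2 * ω / ω : ℝ)) : ℂ) *
          F (s₀, ρ • x) (((1:ℝ), (0:EuclideanSpace ℝ (Fin n))))
        + (((-(-Real.sin (ω*t) * ω) / Real.cos (ω*t)^2 : ℝ)) : ℂ) *
          F (s₀, ρ • x) ((((0:ℝ), x)) : ℝ × _) := by
    have hdecomp : (((1 / Real.cos (ω*t)^2 * ω / ω,
        (-(-Real.sin (ω*t) * ω) / Real.cos (ω*t)^2) • x)) : ℝ × EuclideanSpace ℝ (Fin n))
      = (1 / Real.cos (ω*t)^2 * ω / ω) • (((1:ℝ), (0:EuclideanSpace ℝ (Fin n))))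
        + (-(-Real.sin (ω*t) * ω) / Real.cos (ω*t)^2) • ((((0:ℝ), x)) : ℝ × _) := by
      simp [Prod.ext_iff]
    rw [hdecomp, map_add, map_smul, map_smul, Complex.real_smul, Complex.real_smul]
  have hre : (b * ((‖x‖^2:ℝ):ℂ)).re = 0 := by
    rw [hbdef]
    have h9 : -Complex.I * ((ω:ℂ)/2) * ((Real.tan (ω*t) : ℝ):ℂ) * ((‖x‖^2:ℝ):ℂ)
        = ((-(ω/2 * Real.tan (ω*t) * ‖x‖^2) : ℝ) : ℂ) * Complex.I := by
      push_cast; ring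
    rw [h9, Complex.re_ofReal_mul, Complex.I_re, mul_zero]
  have hutx : u t x = A * Complex.exp (b * ((‖x‖^2:ℝ):ℂ)) * (v s₀) (ρ • x) := by rw [hu_t]
  have hnorm : ‖u t x‖ = a * ‖v s₀ (ρ • x)‖ := by
    rw [hutx, norm_mul, norm_mul]
    rw [Complex.norm_exp, hre]
    simp [hAdef, abs_of_pos hapos]
  have hncast : (n:ℝ) ≠ 0 := Nat.cast_ne_zero.2 (by omega)
  have hexpo : (-(n:ℝ)/2) * ((4:ℝ)/n) = -2 := by field_simp; ring
  have hpow : ‖u t x‖ ^ ((4:ℝ)/n) = ρ^2 * ‖v s₀ (ρ • x)‖ ^ ((4:ℝ)/n) := by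
    rw [hnorm, Real.mul_rpow hapos.le (norm_nonneg _)]
    congr 1
    rw [hadef, ← Real.rpow_mul hc.le, hexpo, hρdef,
      show (-2:ℝ) = -((2:ℕ):ℝ) by norm_num, Real.rpow_neg hc.le, Real.rpow_natCast, inv_pow]
  have hsig : (1 / Real.cos (ω*t)^2 * ω / ω : ℝ) = ρ^2 := by
    rw [hρdef]; field_simp; try ring
  have hexpfac : (1 / Real.cos (ω*t)^2 * ω : ℝ) = ω * ρ^2 := by
    rw [hρdef]; field_simp; try ring
  have hrhov : (-(-Real.sin (ω*t) * ω) / Real.cos (ω*t)^2 : ℝ) = ω * Real.tan (ω*t) * ρ := by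
    rw [hρdef, Real.tan_eq_sin_div_cos]; field_simp; try ring
  have hpow1 : Real.cos (ω*t) ^ (-(n:ℝ)/2 - 1) = a * ρ := by
    rw [hadef, hρdef, Real.rpow_sub hc, Real.rpow_one, div_eq_mul_inv]
  have hcval : ((-Real.sin (ω*t) * ω) * (-(n:ℝ)/2) * Real.cos (ω*t) ^ (-(n:ℝ)/2 - 1) : ℝ)
      = (n:ℝ)/2 * ω * Real.tan (ω*t) * a := by
    rw [hpow1, hρdef, Real.tan_eq_sin_div_cos, div_eq_mul_inv]
    ring
  have hone : ((ρ:ℝ):ℂ)^2 = 1 + ((Real.tan (ω*t) : ℝ):ℂ)^2 := by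
    have h1 : (ρ:ℝ)^2 = 1 + Real.tan (ω*t)^2 := by
      rw [hρdef]
      have h2 := Real.inv_one_add_tan_sq hcne
      rw [inv_pow, ← h2, inv_inv]
    exact_mod_cast congrArg (fun r : ℝ => (r:ℂ)) h1
  have hKb : K * ((Real.tan (ω*t) : ℝ):ℂ) = b * ((‖x‖^2:ℝ):ℂ) := by
    rw [hKdef, hbdef]; push_cast; ring
  have hVP : V (Real.tan (ω * t) / ω, (Real.cos (ω * t))⁻¹ • x) = v s₀ (ρ • x) := rfl
  rw [hpow, hderiv, hlap, hsplit, hutx, hVP, hKb, hsig, hexpfac, hrhov, hcval]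
  simp only [hAdef, hadef, hbdef]
  generalize hg1 : Real.tan (ω * t) = tv at hone ⊢
  generalize hg2 : Real.cos (ω * t) ^ (-(n:ℝ)/2) = av
  push_cast
  linear_combination (((av:ℝ):ℂ) * Complex.exp (-Complex.I * ((ω:ℂ)/2) * ((tv:ℝ):ℂ) * ((‖x‖:ℝ):ℂ)^2)
        * ((ρ:ℝ):ℂ)^2) * hveqC
    + ((ω:ℂ)^2 * ((‖x‖:ℝ):ℂ)^2/2 *
        (((av:ℝ):ℂ) * Complex.exp (-Complex.I * ((ω:ℂ)/2) * ((tv:ℝ):ℂ) * ((‖x‖:ℝ):ℂ)^2)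
          * (v s₀) (ρ • x))) * hone
    + ((ω:ℂ)^2 * ((av:ℝ):ℂ) * Complex.exp (-Complex.I * ((ω:ℂ)/2) * ((tv:ℝ):ℂ) * ((‖x‖:ℝ):ℂ)^2)
        * ((‖x‖:ℝ):ℂ)^2 * (((tv:ℝ):ℂ)^2 - ((ρ:ℝ):ℂ)^2) * (v s₀) (ρ • x) / 2) * Complex.I_sq
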